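/- Let X be a nonempty subset of a Banach space E and let T : X → 2^E be a set-valued mapping such that (1) for every x ∈ X, T(x) is a nonempty weakly closed subset of E; (2) there exists x₀ ∈ X such that T(x₀) is weakly compact in E; (3) for every finite set {x₁,…,xₙ} ⊆ X, the convex hull co{x₁,…,xₙ} is contained in ⋃_{i=1}^n T(xᵢ). Then ⋂_{x∈X} (T(x) ∩ T(x₀)) ≠ ∅; in particular ⋂_{x∈X} T(x) ≠ ∅. -/

import Mathlib

set_option maxHeartbeats 1000000
open Set Metric MeasureTheory Filter Topology Polynomial

local notation "⟪" x ", " y "⟫" => @inner ℝ _ _ x y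

theorem no_smooth_retraction (n : ℕ)
    (U : Set (EuclideanSpace ℝ (Fin n))) (hU : IsOpen U)
    (hBU : closedBall (0 : EuclideanSpace ℝ (Fin n)) 1 ⊆ U)
    (w : EuclideanSpace ℝ (Fin n) → EuclideanSpace ℝ (Fin n))
    (hw : ContDiffOn ℝ ⊤ w U)
    (hsph : ∀ x : EuclideanSpace ℝ (Fin n), ‖x‖ = 1 → w x = 0)
    (hnorm : ∀ x ∈ closedBall (0 : EuclideanSpace ℝ (Fin n)) 1, ‖x + w x‖ = 1) : False := by
  classical
  rcases subsingleton_or_nontrivial (EuclideanSpace ℝ (Fin n)) with hsub | hnt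
  · have h0 : (0 : EuclideanSpace ℝ (Fin n)) ∈ closedBall (0 : EuclideanSpace ℝ (Fin n)) 1 :=
      mem_closedBall_self zero_le_one
    have h1 := hnorm 0 h0
    rw [Subsingleton.elim ((0 : EuclideanSpace ℝ (Fin n)) + w 0) 0, norm_zero] at h1
    exact zero_ne_one h1
  set B : Set (EuclideanSpace ℝ (Fin n)) := closedBall 0 1 with hB
  have hBc : IsCompact B := isCompact_closedBall _ _
  have hconv : Convex ℝ B := convex_closedBall _ _
  have hBmeas : MeasurableSet B := measurableSet_closedBall
  have hdiff : ∀ x ∈ U, DifferentiableAt ℝ w x := fun x hx =>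
    (hw.differentiableOn (by simp)).differentiableAt (hU.mem_nhds hx)
  set A : EuclideanSpace ℝ (Fin n) → EuclideanSpace ℝ (Fin n) →L[ℝ] EuclideanSpace ℝ (Fin n) := fun x => fderiv ℝ w x with hA
  have hAcont : ContinuousOn A U := hw.continuousOn_fderiv_of_isOpen hU le_top
  obtain ⟨L, hL⟩ := hBc.exists_bound_of_continuousOn (hAcont.mono hBU)
  have hL0 : 0 ≤ L := le_trans (norm_nonneg _) (hL 0 (mem_closedBall_self zero_le_one))
  have hUD : UniqueDiffOn ℝ B := uniqueDiffOn_convex hconv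
    (by rw [hB, interior_closedBall (0 : EuclideanSpace ℝ (Fin n)) one_ne_zero]; exact (nonempty_ball.2 one_pos))
  have hlip : ∀ x ∈ B, ∀ y ∈ B, ‖w y - w x‖ ≤ L * ‖y - x‖ := by
    intro x hx y hy
    refine hconv.norm_image_sub_le_of_norm_fderivWithin_le
      (fun z hz => (hdiff z (hBU hz)).differentiableWithinAt) (fun z hz => ?_) hx hy
    rw [(hdiff z (hBU hz)).fderivWithin (hUD z hz)]
    exact hL z hz
  obtain ⟨Cw, hCw⟩ := hBc.exists_bound_of_continuousOn (hw.continuousOn.mono hBU)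
  -- matrices
  set b := (EuclideanSpace.basisFun (Fin n) ℝ).toBasis with hb
  set M : EuclideanSpace ℝ (Fin n) → Matrix (Fin n) (Fin n) ℝ := fun x =>
    LinearMap.toMatrix b b (A x).toLinearMap with hM
  have hMcont : ∀ i j, ContinuousOn (fun x => M x i j) U := by
    intro i j
    have heq : ∀ x, M x i j = (A x) (b j) i := by
      intro x
      rw [hM]; dsimp only
      rw [LinearMap.toMatrix_apply]
      rw [hb, OrthonormalBasis.coe_toBasis_repr_apply, EuclideanSpace.basisFun_repr]
      rfl
    simp only [heq]
    have h1 : ContinuousOn (fun x => (A x) (b j)) U :=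
      (ContinuousLinearMap.apply ℝ (EuclideanSpace ℝ (Fin n)) (b j)).continuous.comp_continuousOn hAcont
    exact (EuclideanSpace.proj (𝕜 := ℝ) i).continuous.comp_continuousOn h1
  have hdetM : ∀ (s : ℝ) (x : EuclideanSpace ℝ (Fin n)), ((1 : EuclideanSpace ℝ (Fin n) →L[ℝ] EuclideanSpace ℝ (Fin n)) + s • A x).det = Matrix.det (1 + s • M x) := by
    intro s x
    have : ((1 : EuclideanSpace ℝ (Fin n) →L[ℝ] EuclideanSpace ℝ (Fin n)) + s • A x).det
        = LinearMap.det ((1 : EuclideanSpace ℝ (Fin n) →L[ℝ] EuclideanSpace ℝ (Fin n)) + s • A x).toLinearMap := rfl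
    rw [this, ← LinearMap.det_toMatrix b]
    congr 1
    have : ((1 : EuclideanSpace ℝ (Fin n) →L[ℝ] EuclideanSpace ℝ (Fin n)) + s • A x).toLinearMap
        = LinearMap.id + s • (A x).toLinearMap := rfl
    rw [this, map_add, LinearEquiv.map_smul, LinearMap.toMatrix_id]
  -- pointwise polynomial expansion of the determinant
  set g : Equiv.Perm (Fin n) → Finset (Fin n) → EuclideanSpace ℝ (Fin n) → ℝ := fun σ t x =>
    ((Equiv.Perm.sign σ : ℤ) : ℝ) * ((∏ i ∈ t, M x (σ i) i) *
      ∏ i ∈ Finset.univ \ t, (1 : Matrix (Fin n) (Fin n) ℝ) (σ i) i) with hg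
  have hgcont : ∀ σ t, ContinuousOn (g σ t) U := by
    intro σ t
    exact continuousOn_const.mul (ContinuousOn.mul
      (continuousOn_finset_prod _ fun i _ => hMcont (σ i) i) continuousOn_const)
  have hpoint : ∀ (s : ℝ) (x : EuclideanSpace ℝ (Fin n)), Matrix.det (1 + s • M x)
      = ∑ σ : Equiv.Perm (Fin n), ∑ t ∈ Finset.univ.powerset, s ^ t.card * g σ t x := by
    intro s x
    rw [Matrix.det_apply]
    refine Finset.sum_congr rfl fun σ _ => ?_
    have hentry : ∀ i : Fin n, (1 + s • M x) (σ i) i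
        = (s * M x (σ i) i) + (1 : Matrix (Fin n) (Fin n) ℝ) (σ i) i := by
      intro i
      simp [Matrix.add_apply, Matrix.smul_apply, smul_eq_mul, add_comm]
    calc (Equiv.Perm.sign σ) • ∏ i, (1 + s • M x) (σ i) i
        = ((Equiv.Perm.sign σ : ℤ) : ℝ) *
          ∏ i, ((s * M x (σ i) i) + (1 : Matrix (Fin n) (Fin n) ℝ) (σ i) i) := by
          rw [Units.smul_def, zsmul_eq_mul]
          congr 1
          exact Finset.prod_congr rfl fun i _ => hentry i
      _ = ((Equiv.Perm.sign σ : ℤ) : ℝ) * ∑ t ∈ Finset.univ.powerset,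
            (∏ i ∈ t, s * M x (σ i) i) *
              ∏ i ∈ Finset.univ \ t, (1 : Matrix (Fin n) (Fin n) ℝ) (σ i) i := by
          rw [Finset.prod_add]
      _ = ∑ t ∈ Finset.univ.powerset, s ^ t.card * g σ t x := by
          rw [Finset.mul_sum]
          refine Finset.sum_congr rfl fun t _ => ?_
          rw [hg]; dsimp only
          rw [Finset.prod_mul_distrib, Finset.prod_const]
          ring
  have hgint : ∀ σ t, IntegrableOn (g σ t) B :=
    fun σ t => ((hgcont σ t).mono hBU).integrableOn_compact hBc
  set c : Equiv.Perm (Fin n) → Finset (Fin n) → ℝ := fun σ t => ∫ x in B, g σ t x with hc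
  set P : Polynomial ℝ := ∑ σ : Equiv.Perm (Fin n), ∑ t ∈ Finset.univ.powerset,
    Polynomial.C (c σ t) * Polynomial.X ^ t.card with hP
  have hPeval : ∀ s : ℝ, P.eval s
      = ∫ x in B, ((1 : EuclideanSpace ℝ (Fin n) →L[ℝ] EuclideanSpace ℝ (Fin n)) + s • A x).det := by
    intro s
    have h1 : EqOn (fun x => ((1 : EuclideanSpace ℝ (Fin n) →L[ℝ] EuclideanSpace ℝ (Fin n)) + s • A x).det)
        (fun x => ∑ σ : Equiv.Perm (Fin n), ∑ t ∈ Finset.univ.powerset, s ^ t.card * g σ t x) B :=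
      fun x _ => by simp only [hdetM, hpoint]
    rw [setIntegral_congr_fun hBmeas h1]
    rw [integral_finset_sum _ (fun σ _ => integrable_finset_sum _ fun t _ => (hgint σ t).const_mul _)]
    rw [hP]
    simp only [Polynomial.eval_finset_sum, Polynomial.eval_mul, Polynomial.eval_C,
      Polynomial.eval_pow, Polynomial.eval_X]
    refine Finset.sum_congr rfl fun σ _ => ?_
    rw [integral_finset_sum _ (fun t _ => (hgint σ t).const_mul _)]
    refine Finset.sum_congr rfl fun t _ => ?_
    rw [integral_const_mul]
    rw [hc]; ring
  -- continuity of the determinant in (s, x)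
  have hFcont : ContinuousOn
      (fun p : ℝ × EuclideanSpace ℝ (Fin n) => Matrix.det (1 + p.1 • M p.2))
      ((Icc (0:ℝ) 1) ×ˢ B) := by
    have hc2 : ContinuousOn (fun p : ℝ × EuclideanSpace ℝ (Fin n) =>
        ∑ σ : Equiv.Perm (Fin n), ∑ t ∈ Finset.univ.powerset, p.1 ^ t.card * g σ t p.2)
        ((Icc (0:ℝ) 1) ×ˢ B) := by
      apply continuousOn_finset_sum; intro σ _
      apply continuousOn_finset_sum; intro t _
      exact (continuous_fst.continuousOn.pow _).mul
        ((hgcont σ t).comp continuous_snd.continuousOn (fun p hp => hBU hp.2))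
    exact hc2.congr fun p _ => hpoint p.1 p.2
  -- uniform positivity of the determinant for small s
  have hdetpos : ∃ s₁ : ℝ, 0 < s₁ ∧ s₁ ≤ 1 ∧
      ∀ s : ℝ, 0 ≤ s → s ≤ s₁ → ∀ x ∈ B, (1/2 : ℝ) ≤ Matrix.det (1 + s • M x) := by
    have hKc : IsCompact ((Icc (0:ℝ) 1) ×ˢ B) := isCompact_Icc.prod hBc
    have hKcl : IsClosed ((Icc (0:ℝ) 1) ×ˢ B) := isClosed_Icc.prod hBc.isClosed
    set Z := ((Icc (0:ℝ) 1) ×ˢ B) ∩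
      ((fun p : ℝ × EuclideanSpace ℝ (Fin n) => Matrix.det (1 + p.1 • M p.2)) ⁻¹' (Iic (1/2)))
      with hZ
    have hZcl : IsClosed Z := hFcont.preimage_isClosed_of_isClosed hKcl isClosed_Iic
    have hZc : IsCompact Z := hKc.of_isClosed_subset hZcl inter_subset_left
    rcases Z.eq_empty_or_nonempty with hZe | hZne
    · refine ⟨1, one_pos, le_refl 1, fun s hs0 hs1 x hx => ?_⟩
      by_contra hlt
      have hmem : (s, x) ∈ Z := by
        refine ⟨⟨⟨hs0, hs1⟩, hx⟩, ?_⟩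
        simp only [mem_preimage, mem_Iic]
        exact le_of_lt (lt_of_not_ge hlt)
      rw [hZe] at hmem; exact hmem
    · obtain ⟨p₀, hp₀, hmin⟩ := hZc.exists_isMinOn hZne continuous_fst.continuousOn
      have hp011 : p₀.1 ≤ 1 := hp₀.1.1.2
      have hp01 : 0 < p₀.1 := by
        rcases lt_or_eq_of_le hp₀.1.1.1 with h | h
        · exact h
        · exfalso
          have hdet1 := hp₀.2
          simp only [mem_preimage, mem_Iic, ← h, zero_smul, add_zero, Matrix.det_one] at hdet1
          norm_num at hdet1
      refine ⟨p₀.1/2, by positivity, by linarith, fun s hs0 hs1 x hx => ?_⟩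
      by_contra hlt
      have hmem : (s, x) ∈ Z := by
        refine ⟨⟨⟨hs0, by linarith⟩, hx⟩, ?_⟩
        simp only [mem_preimage, mem_Iic]
        exact le_of_lt (lt_of_not_ge hlt)
      have h2 := hmin hmem
      simp only [IsMinOn, IsMinFilter] at h2
      have : p₀.1 ≤ s := h2
      linarith
  obtain ⟨s₁, hs₁0, hs₁1, hs₁⟩ := hdetpos
  have hCw0 : 0 ≤ Cw := le_trans (norm_nonneg _) (hCw 0 (mem_closedBall_self zero_le_one))
  -- key computation: for all small positive s, the integral equals the volume of B
  have key : ∀ s : ℝ, 0 < s → s ≤ s₁ → s * L < 1 → s * Cw < 1 →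
      P.eval s = (volume B).toReal := by
    intro s hs0 hss₁ hsL hsCw
    have hs1 : s ≤ 1 := le_trans hss₁ hs₁1
    set fs : EuclideanSpace ℝ (Fin n) → EuclideanSpace ℝ (Fin n) := fun x => x + s • w x with hfs
    have hfd : ∀ x ∈ U, HasFDerivAt fs (1 + s • A x) x := fun x hx =>
      (hasFDerivAt_id x).add ((hdiff x hx).hasFDerivAt.const_smul s)
    have hdet_pos : ∀ x ∈ B,
        (0:ℝ) < ((1 : EuclideanSpace ℝ (Fin n) →L[ℝ] EuclideanSpace ℝ (Fin n)) + s • A x).det := by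
      intro x hx
      rw [hdetM]
      linarith [hs₁ s hs0.le hss₁ x hx]
    have hinj : InjOn fs B := by
      intro x hx y hy hxy
      have h1 : x - y = s • w y - s • w x := by
        conv_lhs => rw [show x = (x + s • w x) - s • w x by abel]
        rw [show x + s • w x = y + s • w y from hxy]
        abel
      have h2 : ‖x - y‖ ≤ s * (L * ‖x - y‖) := by
        have hstep : ‖x - y‖ = s * ‖w y - w x‖ := by
          rw [show x - y = s • (w y - w x) by rw [h1, smul_sub], norm_smul,
            Real.norm_of_nonneg hs0.le]
        have h4 := hlip x hx y hy
        calc ‖x - y‖ = s * ‖w y - w x‖ := hstep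
          _ ≤ s * (L * ‖y - x‖) := mul_le_mul_of_nonneg_left h4 hs0.le
          _ = s * (L * ‖x - y‖) := by rw [norm_sub_rev y x]
      have h3 : ‖x - y‖ = 0 := by nlinarith [norm_nonneg (x - y)]
      exact eq_of_sub_eq_zero (norm_eq_zero.1 h3)
    have hmaps : MapsTo fs B B := by
      intro x hx
      have hid : fs x = (1 - s) • x + s • (x + w x) := by
        rw [hfs]; dsimp only
        rw [smul_add, sub_smul, one_smul]; abel
      rw [mem_closedBall_zero_iff, hid]
      calc ‖(1 - s) • x + s • (x + w x)‖ ≤ ‖(1 - s) • x‖ + ‖s • (x + w x)‖ := norm_add_le _ _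
        _ = (1 - s) * ‖x‖ + s * ‖x + w x‖ := by
            rw [norm_smul, norm_smul, Real.norm_of_nonneg (by linarith), Real.norm_of_nonneg hs0.le]
        _ ≤ (1 - s) * 1 + s * 1 := by
            have hx1 : ‖x‖ ≤ 1 := mem_closedBall_zero_iff.1 hx
            have := hnorm x hx
            nlinarith
        _ = 1 := by ring
    have hbdfix : ∀ x : EuclideanSpace ℝ (Fin n), ‖x‖ = 1 → fs x = x := by
      intro x hx1
      rw [hfs]; dsimp only; rw [hsph x hx1, smul_zero, add_zero]
    have hcont_fs : ContinuousOn fs B :=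
      continuousOn_id.add ((hw.continuousOn.mono hBU).const_smul s)
    have hScomp : IsCompact (fs '' B) := hBc.image_of_continuousOn hcont_fs
    have hopen : IsOpen (fs '' B ∩ ball 0 1) := by
      rw [isOpen_iff_mem_nhds]
      rintro y ⟨⟨x, hx, rfl⟩, hyball⟩
      have hxball : ‖x‖ < 1 := by
        rcases lt_or_eq_of_le (mem_closedBall_zero_iff.1 hx) with h | h
        · exact h
        · exfalso
          rw [hbdfix x h] at hyball
          rw [mem_ball_zero_iff, h] at hyball
          exact lt_irrefl 1 hyball
      have hcd : ContDiffAt ℝ 1 fs x := by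
        have hcd0 : ContDiffOn ℝ ⊤ fs U := contDiffOn_id.add (hw.const_smul s)
        exact (hcd0.contDiffAt (hU.mem_nhds (hBU hx))).of_le le_top
      have hstrict : HasStrictFDerivAt fs (1 + s • A x) x := by
        have h := hcd.hasStrictFDerivAt one_ne_zero
        rwa [(hfd x (hBU hx)).fderiv] at h
      set e := ((1 : EuclideanSpace ℝ (Fin n) →L[ℝ] EuclideanSpace ℝ (Fin n)) + s • A x).toContinuousLinearEquivOfDetNeZero
        (ne_of_gt (hdet_pos x hx)) with he
      have hstrict' : HasStrictFDerivAt fs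
          (e : EuclideanSpace ℝ (Fin n) →L[ℝ] EuclideanSpace ℝ (Fin n)) x := by
        rwa [he, ContinuousLinearMap.coe_toContinuousLinearEquivOfDetNeZero]
      have hmap := hstrict'.map_nhds_eq_of_equiv
      have h1 : ball (0 : EuclideanSpace ℝ (Fin n)) 1 ∈ nhds x :=
        isOpen_ball.mem_nhds (mem_ball_zero_iff.2 hxball)
      have h2 : fs '' ball 0 1 ∈ nhds (fs x) := by
        rw [← hmap]; exact Filter.image_mem_map h1
      refine Filter.mem_of_superset (Filter.inter_mem h2 (isOpen_ball.mem_nhds hyball)) ?_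
      rintro z ⟨⟨x', hx', rfl⟩, hz⟩
      exact ⟨⟨x', ball_subset_closedBall hx', rfl⟩, hz⟩
    have hVne : (fs '' B ∩ ball 0 1).Nonempty := by
      refine ⟨fs 0, mem_image_of_mem _ (mem_closedBall_self zero_le_one), ?_⟩
      rw [mem_ball_zero_iff, hfs]; dsimp only
      rw [zero_add, norm_smul, Real.norm_of_nonneg hs0.le]
      calc s * ‖w 0‖ ≤ s * Cw :=
            mul_le_mul_of_nonneg_left (hCw 0 (mem_closedBall_self zero_le_one)) hs0.le
        _ < 1 := hsCw
    have hball_sub : ball (0 : EuclideanSpace ℝ (Fin n)) 1 ⊆ fs '' B := by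
      by_contra hns
      rw [not_subset] at hns
      obtain ⟨z, hzball, hznot⟩ := hns
      have hW : IsOpen (ball (0 : EuclideanSpace ℝ (Fin n)) 1 ∩ (fs '' B)ᶜ) :=
        isOpen_ball.inter hScomp.isClosed.isOpen_compl
      have hpc : IsPreconnected (ball (0 : EuclideanSpace ℝ (Fin n)) 1) :=
        (convex_ball (0 : EuclideanSpace ℝ (Fin n)) 1).isPreconnected
      have hcover : ball (0 : EuclideanSpace ℝ (Fin n)) 1 ⊆
          (fs '' B ∩ ball 0 1) ∪ (ball 0 1 ∩ (fs '' B)ᶜ) := by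
        intro z' hz'
        by_cases h : z' ∈ fs '' B
        · exact Or.inl ⟨h, hz'⟩
        · exact Or.inr ⟨hz', h⟩
      have h1ne : (ball (0 : EuclideanSpace ℝ (Fin n)) 1 ∩ (fs '' B ∩ ball 0 1)).Nonempty := by
        obtain ⟨y, hy1, hy2⟩ := hVne
        exact ⟨y, hy2, hy1, hy2⟩
      have h2ne : (ball (0 : EuclideanSpace ℝ (Fin n)) 1 ∩ (ball 0 1 ∩ (fs '' B)ᶜ)).Nonempty :=
        ⟨z, hzball, hzball, hznot⟩
      obtain ⟨y, _, ⟨hy1, _⟩, _, hy2⟩ := hpc _ _ hopen hW hcover h1ne h2ne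
      exact hy2 hy1
    have himg : fs '' B = B := by
      refine subset_antisymm hmaps.image_subset ?_
      calc B = closure (ball (0 : EuclideanSpace ℝ (Fin n)) 1) :=
            (closure_ball (0 : EuclideanSpace ℝ (Fin n)) one_ne_zero).symm
        _ ⊆ closure (fs '' B) := closure_mono hball_sub
        _ = fs '' B := hScomp.isClosed.closure_eq
    have hCOV := integral_image_eq_integral_abs_det_fderiv_smul volume hBmeas
        (fun x hx => (hfd x (hBU hx)).hasFDerivWithinAt) hinj (fun _ => (1:ℝ))
    rw [himg, setIntegral_const] at hCOV
    have habs : EqOn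
        (fun x => |((1 : EuclideanSpace ℝ (Fin n) →L[ℝ] EuclideanSpace ℝ (Fin n)) + s • A x).det| • (1:ℝ))
        (fun x => ((1 : EuclideanSpace ℝ (Fin n) →L[ℝ] EuclideanSpace ℝ (Fin n)) + s • A x).det) B := by
      intro x hx
      dsimp only
      rw [smul_eq_mul, mul_one, abs_of_pos (hdet_pos x hx)]
    rw [setIntegral_congr_fun hBmeas habs] at hCOV
    rw [hPeval s, ← hCOV, smul_eq_mul, mul_one, measureReal_def]
  -- choose the threshold
  set s₂ : ℝ := min s₁ (min (1/(2*(L+1))) (1/(2*(Cw+1)))) with hs₂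
  have hs₂0 : 0 < s₂ := by
    apply lt_min hs₁0
    apply lt_min
    · positivity
    · positivity
  have hconst : ∀ s ∈ Ioc (0:ℝ) s₂, P.eval s = (volume B).toReal := by
    intro s hs
    obtain ⟨hs0, hs2⟩ := hs
    have hA1 : s ≤ s₁ := le_trans hs2 (min_le_left _ _)
    have hA2 : s ≤ 1/(2*(L+1)) := le_trans hs2 (le_trans (min_le_right _ _) (min_le_left _ _))
    have hA3 : s ≤ 1/(2*(Cw+1)) := le_trans hs2 (le_trans (min_le_right _ _) (min_le_right _ _))
    have hL1 : s * L < 1 := by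
      have h1 : s * L ≤ (1/(2*(L+1))) * L := mul_le_mul_of_nonneg_right hA2 hL0
      have h2 : (1/(2*(L+1))) * L < 1 := by
        rw [div_mul_eq_mul_div, div_lt_one (by positivity)]
        nlinarith
      linarith
    have hC1 : s * Cw < 1 := by
      have h1 : s * Cw ≤ (1/(2*(Cw+1))) * Cw := mul_le_mul_of_nonneg_right hA3 hCw0
      have h2 : (1/(2*(Cw+1))) * Cw < 1 := by
        rw [div_mul_eq_mul_div, div_lt_one (by positivity)]
        nlinarith
      linarith
    exact key s hs0 hA1 hL1 hC1
  -- P is the constant polynomial (volume B).toReal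
  have hPP : P = Polynomial.C ((volume B).toReal) := by
    have h0 : P - Polynomial.C ((volume B).toReal) = 0 := by
      apply Polynomial.eq_zero_of_infinite_isRoot
      apply Set.Infinite.mono (s := Ioc (0:ℝ) s₂)
      · intro s hs
        simp only [mem_setOf_eq, Polynomial.IsRoot, Polynomial.eval_sub, Polynomial.eval_C]
        rw [hconst s hs]; ring
      · exact Set.Ioc_infinite hs₂0
    have := sub_eq_zero.1 h0
    exact this
  have hP1 : P.eval 1 = (volume B).toReal := by rw [hPP, Polynomial.eval_C]
  -- the determinant of the derivative of the retraction vanishes on the open ball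
  have hdet0 : ∀ x ∈ ball (0 : EuclideanSpace ℝ (Fin n)) 1,
      ((1 : EuclideanSpace ℝ (Fin n) →L[ℝ] EuclideanSpace ℝ (Fin n)) + A x).det = 0 := by
    intro x hx
    by_contra hne
    have hxU : x ∈ U := hBU (ball_subset_closedBall hx)
    have hr : HasFDerivAt (fun y : EuclideanSpace ℝ (Fin n) => y + w y) (1 + A x) x :=
      (hasFDerivAt_id x).add (hdiff x hxU).hasFDerivAt
    have hev : (fun y : EuclideanSpace ℝ (Fin n) => (inner ℝ (y + w y) (y + w y) : ℝ))
        =ᶠ[nhds x] (fun _ => (1:ℝ)) := by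
      filter_upwards [isOpen_ball.mem_nhds hx] with y hy
      rw [real_inner_self_eq_norm_sq, hnorm y (ball_subset_closedBall hy)]
      norm_num
    have hD := hr.inner ℝ hr
    have hD0 : HasFDerivAt (fun y : EuclideanSpace ℝ (Fin n) => (inner ℝ (y + w y) (y + w y) : ℝ))
        (0 : EuclideanSpace ℝ (Fin n) →L[ℝ] ℝ) x :=
      (hasFDerivAt_const (1:ℝ) x).congr_of_eventuallyEq hev
    have huniq := hD.unique hD0
    set e := ((1 : EuclideanSpace ℝ (Fin n) →L[ℝ] EuclideanSpace ℝ (Fin n)) + A x).toContinuousLinearEquivOfDetNeZero hne with he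
    obtain ⟨v, hv⟩ : ∃ v, ((1 : EuclideanSpace ℝ (Fin n) →L[ℝ] EuclideanSpace ℝ (Fin n)) + A x) v = x + w x := by
      refine ⟨e.symm (x + w x), ?_⟩
      have h5 := e.apply_symm_apply (x + w x)
      rwa [he, ContinuousLinearMap.toContinuousLinearEquivOfDetNeZero_apply] at h5
    have h5 := congrArg (fun T : EuclideanSpace ℝ (Fin n) →L[ℝ] ℝ => T v) huniq
    simp only [ContinuousLinearMap.comp_apply, ContinuousLinearMap.prod_apply,
      ContinuousLinearMap.zero_apply, fderivInnerCLM_apply, hv] at h5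
    have hx1 : ‖x + w x‖ = 1 := hnorm x (ball_subset_closedBall hx)
    rw [real_inner_self_eq_norm_sq, hx1] at h5
    norm_num at h5
  -- hence the integral at s = 1 vanishes
  have hP1' : P.eval 1 = 0 := by
    rw [hPeval 1]
    have hae : B =ᵐ[volume] ball (0 : EuclideanSpace ℝ (Fin n)) 1 := by
      rw [MeasureTheory.ae_eq_set]
      constructor
      · have hsub : B \ ball (0 : EuclideanSpace ℝ (Fin n)) 1 ⊆ sphere 0 1 := by
          intro z hz
          have h1 : ‖z‖ ≤ 1 := mem_closedBall_zero_iff.1 hz.1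
          have h2 : ¬ ‖z‖ < 1 := fun h => hz.2 (mem_ball_zero_iff.2 h)
          rw [mem_sphere_zero_iff_norm]
          linarith [lt_or_eq_of_le h1]
        exact measure_mono_null hsub (Measure.addHaar_sphere volume 0 1)
      · rw [diff_eq_empty.2 ball_subset_closedBall]
        exact measure_empty
    rw [setIntegral_congr_set hae]
    rw [setIntegral_congr_fun measurableSet_ball
      (fun x hx => by simp only [one_smul]; exact hdet0 x hx)]
    exact integral_zero _ _
  have hvol : 0 < (volume B).toReal := by
    rw [ENNReal.toReal_pos_iff]
    constructor
    · refine lt_of_lt_of_le ?_ (measure_mono ball_subset_closedBall)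
      exact measure_ball_pos volume 0 one_pos
    · exact measure_closedBall_lt_top
  rw [hP1] at hP1'
  linarith

theorem exists_smooth_approx (n : ℕ) (f : EuclideanSpace ℝ (Fin n) → EuclideanSpace ℝ (Fin n))
    (hf : ContinuousOn f (closedBall 0 1)) (δ : ℝ) (hδ : 0 < δ) :
    ∃ g : EuclideanSpace ℝ (Fin n) → EuclideanSpace ℝ (Fin n), ContDiff ℝ ⊤ g ∧
      ∀ x ∈ closedBall (0 : EuclideanSpace ℝ (Fin n)) 1, ‖g x - f x‖ ≤ δ := by
  classical
  set B : Set (EuclideanSpace ℝ (Fin n)) := closedBall 0 1 with hB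
  haveI : CompactSpace B := isCompact_iff_compactSpace.1 (isCompact_closedBall _ _)
  set SA : Subalgebra ℝ C(B, ℝ) :=
  { carrier := {φ | ∃ F : EuclideanSpace ℝ (Fin n) → ℝ, ContDiff ℝ ⊤ F ∧ ∀ x : B, φ x = F x}
    mul_mem' := by
      rintro φ ψ ⟨F, hF, hφ⟩ ⟨G, hG, hψ⟩
      exact ⟨fun x => F x * G x, hF.mul hG, fun x => by
        simp [ContinuousMap.mul_apply, hφ x, hψ x]⟩
    add_mem' := by
      rintro φ ψ ⟨F, hF, hφ⟩ ⟨G, hG, hψ⟩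
      exact ⟨fun x => F x + G x, hF.add hG, fun x => by
        simp [ContinuousMap.add_apply, hφ x, hψ x]⟩
    algebraMap_mem' := fun c => ⟨fun _ => c, contDiff_const, fun x => rfl⟩ } with hSA
  have hsep : SA.SeparatesPoints := by
    rintro x y hxy
    have hne : (x : EuclideanSpace ℝ (Fin n)) ≠ (y : EuclideanSpace ℝ (Fin n)) :=
      Subtype.coe_injective.ne hxy
    set c : EuclideanSpace ℝ (Fin n) := (x : EuclideanSpace ℝ (Fin n)) - y with hc
    have hccont : Continuous fun z : B => (inner ℝ (z : EuclideanSpace ℝ (Fin n)) c : ℝ) :=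
      (continuous_inner.comp (continuous_subtype_val.prodMk continuous_const) : _)
    refine ⟨_, ⟨(⟨fun z : B => (inner ℝ (z : EuclideanSpace ℝ (Fin n)) c : ℝ), hccont⟩ : C(B, ℝ)),
      ⟨fun z => (inner ℝ z c : ℝ), contDiff_id.inner ℝ contDiff_const, fun z => rfl⟩, rfl⟩, ?_⟩
    intro h
    have h2 : (inner ℝ ((x : EuclideanSpace ℝ (Fin n)) - y) c : ℝ) = 0 := by
      rw [inner_sub_left]
      simpa using sub_eq_zero.2 h
    rw [hc] at h2
    exact (sub_ne_zero.2 hne) (inner_self_eq_zero.1 h2)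
  have hδ' : 0 < δ / (n + 1) := by positivity
  have happrox : ∀ i : Fin n, ∃ G : EuclideanSpace ℝ (Fin n) → ℝ, ContDiff ℝ ⊤ G ∧
      ∀ x : B, |G (x : EuclideanSpace ℝ (Fin n)) - f (x : EuclideanSpace ℝ (Fin n)) i| ≤ δ / (n + 1) := by
    intro i
    have hfc : Continuous fun x : B => f (x : EuclideanSpace ℝ (Fin n)) i := by
      have h1 : Continuous (B.restrict f) := hf.restrict
      exact (EuclideanSpace.proj (𝕜 := ℝ) i).continuous.comp h1
    obtain ⟨ψ, hψ⟩ := ContinuousMap.exists_mem_subalgebra_near_continuousMap_of_separatesPoints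
      SA hsep ⟨fun x : B => f (x : EuclideanSpace ℝ (Fin n)) i, hfc⟩ (δ / (n + 1)) hδ'
    obtain ⟨F, hFsm, hFval⟩ := ψ.2
    refine ⟨F, hFsm, fun x => ?_⟩
    have h3 := ContinuousMap.norm_coe_le_norm
      ((ψ : C(B, ℝ)) - ⟨fun x : B => f (x : EuclideanSpace ℝ (Fin n)) i, hfc⟩) x
    simp only [ContinuousMap.sub_apply, ContinuousMap.coe_mk] at h3
    rw [← hFval x]
    calc |(ψ : C(B, ℝ)) x - f (x : EuclideanSpace ℝ (Fin n)) i| ≤ _ := h3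
      _ ≤ δ / (n + 1) := le_of_lt hψ
  choose G hGsm hGval using happrox
  set L := EuclideanSpace.equiv (Fin n) ℝ
  refine ⟨fun x => L.symm (fun i => G i x), ?_, ?_⟩
  · exact (L.symm.contDiff).comp (contDiff_pi.2 fun i => hGsm i)
  · intro x hx
    have hxB : x ∈ B := hx
    have hcoord : ∀ i, |G i x - f x i| ≤ δ / (n + 1) := fun i => hGval i ⟨x, hxB⟩
    have hnormeq : ‖L.symm (fun i => G i x) - f x‖
        = Real.sqrt (∑ i, ‖G i x - f x i‖ ^ 2) := by
      rw [EuclideanSpace.norm_eq]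
      congr 1
    have hsum : (∑ i, ‖G i x - f x i‖ ^ 2) ≤ (n : ℝ) * (δ / (n + 1)) ^ 2 := by
      calc (∑ i, ‖G i x - f x i‖ ^ 2) ≤ ∑ _i : Fin n, (δ / (n + 1)) ^ 2 := by
            refine Finset.sum_le_sum fun i _ => ?_
            have := hcoord i
            rw [Real.norm_eq_abs]
            nlinarith [abs_nonneg (G i x - f x i)]
        _ = (n : ℝ) * (δ / (n + 1)) ^ 2 := by
            rw [Finset.sum_const, Finset.card_univ, Fintype.card_fin, nsmul_eq_mul]
    rw [hnormeq]
    have h9 : (n : ℝ) * (δ / (n + 1)) ^ 2 ≤ δ ^ 2 := by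
      rw [div_pow, mul_div_assoc', div_le_iff₀ (by positivity)]
      nlinarith [sq_nonneg δ, Nat.cast_nonneg (α := ℝ) n,
        mul_nonneg (sq_nonneg δ) (Nat.cast_nonneg (α := ℝ) n),
        mul_nonneg (sq_nonneg δ) (sq_nonneg ((n:ℝ)))]
    calc Real.sqrt (∑ i, ‖G i x - f x i‖ ^ 2) ≤ Real.sqrt (δ ^ 2) :=
          Real.sqrt_le_sqrt (le_trans hsum h9)
      _ = δ := Real.sqrt_sq hδ.le

theorem brouwer_closedBall (n : ℕ) (f : EuclideanSpace ℝ (Fin n) → EuclideanSpace ℝ (Fin n))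
    (hf : ContinuousOn f (closedBall 0 1))
    (hmaps : MapsTo f (closedBall (0 : EuclideanSpace ℝ (Fin n)) 1) (closedBall 0 1)) :
    ∃ x ∈ closedBall (0 : EuclideanSpace ℝ (Fin n)) 1, f x = x := by
  classical
  by_contra hcon
  push_neg at hcon
  set B : Set (EuclideanSpace ℝ (Fin n)) := closedBall 0 1 with hB
  have hBc : IsCompact B := isCompact_closedBall _ _
  have hBne : B.Nonempty := ⟨0, mem_closedBall_self zero_le_one⟩
  have hcont : ContinuousOn (fun x => ‖f x - x‖) B := (hf.sub continuousOn_id).norm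
  obtain ⟨x₀, hx₀B, hmin⟩ := hBc.exists_isMinOn hBne hcont
  set ε : ℝ := ‖f x₀ - x₀‖ with hε'
  have hε : 0 < ε := norm_pos_iff.2 (sub_ne_zero.2 (hcon x₀ hx₀B))
  have hmin' : ∀ x ∈ B, ε ≤ ‖f x - x‖ := fun x hx => hmin hx
  obtain ⟨g₀, hg₀sm, happ⟩ := exists_smooth_approx n f hf (ε/4) (by positivity)
  set τ : ℝ := (1 + ε/4)⁻¹ with hτ
  have hτpos : 0 < τ := by rw [hτ]; positivity
  have hτle : τ ≤ 1 := by
    rw [hτ]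
    rw [inv_le_one_iff₀]
    right; linarith
  set g : EuclideanSpace ℝ (Fin n) → EuclideanSpace ℝ (Fin n) := fun x => τ • g₀ x with hg
  have hgsm : ContDiff ℝ ⊤ g := hg₀sm.const_smul τ
  have hg₀bd : ∀ x ∈ B, ‖g₀ x‖ ≤ 1 + ε/4 := by
    intro x hx
    have h1 : ‖f x‖ ≤ 1 := mem_closedBall_zero_iff.1 (hmaps hx)
    have h2 := happ x hx
    calc ‖g₀ x‖ ≤ ‖f x‖ + ‖g₀ x - f x‖ := by
          have := norm_add_le (f x) (g₀ x - f x)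
          simpa using this
      _ ≤ 1 + ε/4 := add_le_add h1 h2
  have hgB : ∀ x ∈ B, ‖g x‖ ≤ 1 := by
    intro x hx
    rw [hg]; dsimp only
    rw [norm_smul, Real.norm_of_nonneg hτpos.le]
    calc τ * ‖g₀ x‖ ≤ τ * (1 + ε/4) := mul_le_mul_of_nonneg_left (hg₀bd x hx) hτpos.le
      _ = 1 := by rw [hτ]; field_simp
  have hgg₀ : ∀ x ∈ B, ‖g x - g₀ x‖ ≤ ε/4 := by
    intro x hx
    rw [hg]; dsimp only
    have h1 : τ • g₀ x - g₀ x = (τ - 1) • g₀ x := by rw [sub_smul, one_smul]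
    rw [h1, norm_smul, Real.norm_eq_abs, abs_of_nonpos (by linarith)]
    have h2 : -(τ - 1) = (ε/4) * τ := by
      rw [hτ]; field_simp; ring
    rw [h2]
    calc ε/4 * τ * ‖g₀ x‖ ≤ ε/4 * τ * (1 + ε/4) :=
          mul_le_mul_of_nonneg_left (hg₀bd x hx) (by positivity)
      _ = ε/4 := by rw [hτ]; field_simp
  have hgfix : ∀ x ∈ B, ε/2 ≤ ‖x - g x‖ := by
    intro x hx
    have h1 := hmin' x hx
    have h2 := happ x hx
    have h3 := hgg₀ x hx
    have h4 : ‖f x - x‖ ≤ ‖f x - g₀ x‖ + ‖g₀ x - g x‖ + ‖g x - x‖ := by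
      have := norm_add₃_le (a := f x - g₀ x) (b := g₀ x - g x) (c := g x - x)
      simpa using this
    rw [norm_sub_rev] at h2 h3
    rw [norm_sub_rev x (g x)]
    linarith
  have hune : ∀ x ∈ B, x - g x ≠ 0 := by
    intro x hx h0
    have := hgfix x hx
    rw [h0, norm_zero] at this
    linarith
  -- retraction data
  set u : EuclideanSpace ℝ (Fin n) → EuclideanSpace ℝ (Fin n) := fun x => x - g x with hu'
  have husm : ContDiff ℝ ⊤ u := contDiff_id.sub hgsm
  set bfn : EuclideanSpace ℝ (Fin n) → ℝ := fun x => (inner ℝ x (u x) : ℝ) with hbfn'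
  set qfn : EuclideanSpace ℝ (Fin n) → ℝ := fun x => (inner ℝ (u x) (u x) : ℝ) with hqfn'
  set dfn : EuclideanSpace ℝ (Fin n) → ℝ :=
    fun x => bfn x ^ 2 + (1 - (inner ℝ x x : ℝ)) * qfn x with hdfn'
  have hbsm : ContDiff ℝ ⊤ bfn := contDiff_id.inner ℝ husm
  have hqsm : ContDiff ℝ ⊤ qfn := husm.inner ℝ husm
  have hdsm : ContDiff ℝ ⊤ dfn := by
    apply (hbsm.pow 2).add
    exact (contDiff_const.sub (contDiff_id.inner ℝ contDiff_id)).mul hqsm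
  have hqpos : ∀ x ∈ B, 0 < qfn x := by
    intro x hx
    rw [hqfn']; dsimp only
    rw [real_inner_self_eq_norm_sq]
    exact pow_pos (norm_pos_iff.2 (hune x hx)) 2
  have hbpos : ∀ x : EuclideanSpace ℝ (Fin n), ‖x‖ = 1 → 0 < bfn x := by
    intro x hx1
    have hxB : x ∈ B := by rw [hB, mem_closedBall_zero_iff, hx1]
    by_contra hble
    push_neg at hble
    have hxx : (inner ℝ x x : ℝ) = 1 := by rw [real_inner_self_eq_norm_sq, hx1]; norm_num
    have h1 : bfn x = 1 - (inner ℝ x (g x) : ℝ) := by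
      rw [hbfn']; dsimp only; rw [hu']; dsimp only; rw [inner_sub_right, hxx]
    have h4 : (1:ℝ) ≤ (inner ℝ x (g x) : ℝ) := by linarith [h1 ▸ hble]
    have h5 : ‖g x‖ ≤ 1 := hgB x hxB
    have h3 : ‖x - g x‖^2 = ‖x‖^2 - 2*(inner ℝ x (g x) : ℝ) + ‖g x‖^2 := norm_sub_sq_real x (g x)
    have h6 : ‖x - g x‖^2 ≤ 0 := by rw [h3, hx1]; nlinarith [norm_nonneg (g x)]
    have h7 := hgfix x hxB
    nlinarith
  -- the open set where everything is defined
  set U : Set (EuclideanSpace ℝ (Fin n)) := {x | 0 < dfn x} with hU'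
  have hUopen : IsOpen U := isOpen_lt continuous_const hdsm.continuous
  have hBU : B ⊆ U := by
    intro x hx
    rcases lt_or_eq_of_le (mem_closedBall_zero_iff.1 hx) with h | h
    · have h1 : 0 < 1 - (inner ℝ x x : ℝ) := by
        rw [real_inner_self_eq_norm_sq]
        nlinarith [norm_nonneg x]
      exact add_pos_of_nonneg_of_pos (sq_nonneg _) (mul_pos h1 (hqpos x hx))
    · have hb := hbpos x h
      have hxx : (inner ℝ x x : ℝ) = 1 := by rw [real_inner_self_eq_norm_sq, h]; norm_num
      show 0 < dfn x
      rw [hdfn']; dsimp only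
      rw [hxx]
      have : (0:ℝ) < bfn x ^ 2 := pow_pos hb 2
      nlinarith
  set t : EuclideanSpace ℝ (Fin n) → ℝ := fun x => (-bfn x + Real.sqrt (dfn x)) / qfn x with ht'
  set wfn : EuclideanSpace ℝ (Fin n) → EuclideanSpace ℝ (Fin n) := fun x => t x • u x with hwfn'
  have hqU : ∀ x ∈ U, qfn x ≠ 0 := by
    intro x hx h0
    have hu0 : u x = 0 := inner_self_eq_zero.1 h0
    have hd0 : dfn x = 0 := by
      rw [hdfn']; dsimp only
      rw [hbfn']; dsimp only
      rw [hqfn']; dsimp only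
      rw [hu0, inner_zero_right, inner_zero_left]
      ring
    have : (0:ℝ) < dfn x := hx
    rw [hd0] at this
    exact lt_irrefl 0 this
  have hwcd : ContDiffOn ℝ ⊤ wfn U := by
    intro x hx
    apply ContDiffAt.contDiffWithinAt
    have hq := hqU x hx
    have hd : dfn x ≠ 0 := ne_of_gt hx
    have ht : ContDiffAt ℝ ⊤ t x :=
      ((hbsm.contDiffAt.neg.add (hdsm.contDiffAt.sqrt hd)).div hqsm.contDiffAt hq)
    exact ht.smul husm.contDiffAt
  have hsph : ∀ x : EuclideanSpace ℝ (Fin n), ‖x‖ = 1 → wfn x = 0 := by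
    intro x hx1
    have hb := hbpos x hx1
    have hxx : (inner ℝ x x : ℝ) = 1 := by rw [real_inner_self_eq_norm_sq, hx1]; norm_num
    have hd : dfn x = bfn x ^ 2 := by
      rw [hdfn']; dsimp only; rw [hxx]; ring
    have ht0 : t x = 0 := by
      rw [ht']; dsimp only
      rw [hd, Real.sqrt_sq hb.le]
      simp
    rw [hwfn']; dsimp only
    rw [ht0, zero_smul]
  have hnorm1 : ∀ x ∈ B, ‖x + wfn x‖ = 1 := by
    intro x hx
    have hxU := hBU hx
    have hq := hqpos x hx
    have hd : (0:ℝ) < dfn x := hxU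
    have hqt : qfn x * t x = -bfn x + Real.sqrt (dfn x) := by
      rw [ht']; dsimp only; field_simp
    have hsq : (qfn x * t x + bfn x)^2 = dfn x := by
      rw [hqt]
      have : -bfn x + Real.sqrt (dfn x) + bfn x = Real.sqrt (dfn x) := by ring
      rw [this, Real.sq_sqrt hd.le]
    have hroot : qfn x * t x ^2 + 2 * bfn x * t x + ((inner ℝ x x : ℝ) - 1) = 0 := by
      have h6 : qfn x * (qfn x * t x ^2 + 2 * bfn x * t x + ((inner ℝ x x : ℝ) - 1)) = 0 := by
        have hexp : (qfn x * t x + bfn x)^2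
            = qfn x * (qfn x * t x ^2 + 2 * bfn x * t x) + bfn x ^2 := by ring
        have hdd : dfn x = bfn x ^ 2 + (1 - (inner ℝ x x : ℝ)) * qfn x := by rw [hdfn']
        nlinarith [hsq]
      rcases mul_eq_zero.1 h6 with h | h
      · exact absurd h (ne_of_gt hq)
      · exact h
    have hexp2 : ‖x + wfn x‖^2 = (inner ℝ x x : ℝ) + 2 * (t x * bfn x) + t x ^2 * qfn x := by
      rw [norm_add_sq_real]
      rw [hwfn']; dsimp only
      rw [real_inner_smul_right, norm_smul, Real.norm_eq_abs]
      rw [mul_pow, sq_abs]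
      rw [← real_inner_self_eq_norm_sq x, ← real_inner_self_eq_norm_sq (u x)]
      try simp only [hbfn', hqfn']
      try ring
    have hone : ‖x + wfn x‖^2 = 1 := by
      rw [hexp2]; nlinarith [hroot]
    have h7 : (‖x + wfn x‖ - 1) * (‖x + wfn x‖ + 1) = 0 := by nlinarith [hone]
    rcases mul_eq_zero.1 h7 with h | h
    · linarith
    · nlinarith [norm_nonneg (x + wfn x)]
  exact no_smooth_retraction n U hUopen hBU wfn hwcd hsph hnorm1

theorem brouwer_compact_convex (n : ℕ) (K : Set (EuclideanSpace ℝ (Fin n)))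
    (hKne : K.Nonempty) (hKc : IsCompact K) (hKconv : Convex ℝ K)
    (f : EuclideanSpace ℝ (Fin n) → EuclideanSpace ℝ (Fin n))
    (hf : ContinuousOn f K) (hmaps : MapsTo f K K) : ∃ x ∈ K, f x = x := by
  classical
  have hcomplete : IsComplete K := hKc.isClosed.isComplete
  have hproj : ∀ z : EuclideanSpace ℝ (Fin n),
      ∃ v ∈ K, ∀ y ∈ K, (inner ℝ (z - v) (y - v) : ℝ) ≤ 0 := by
    intro z
    obtain ⟨v, hvK, hvmin⟩ := exists_norm_eq_iInf_of_complete_convex hKne hcomplete hKconv z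
    exact ⟨v, hvK, (norm_eq_iInf_iff_real_inner_le_zero hKconv hvK).1 hvmin⟩
  choose p hpK hpvar using hproj
  have hplip : ∀ z₁ z₂, ‖p z₁ - p z₂‖ ≤ ‖z₁ - z₂‖ := by
    intro z₁ z₂
    have e1 : (inner ℝ (z₁ - p z₁) (p z₂ - p z₁) : ℝ) ≤ 0 := hpvar z₁ (p z₂) (hpK z₂)
    have e2 : (inner ℝ (z₂ - p z₂) (p z₁ - p z₂) : ℝ) ≤ 0 := hpvar z₂ (p z₁) (hpK z₁)
    have key : (inner ℝ (p z₁ - p z₂) (p z₁ - p z₂) : ℝ) ≤ inner ℝ (z₁ - z₂) (p z₁ - p z₂) := by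
      have e3 : (0:ℝ) ≤ inner ℝ (z₁ - p z₁) (p z₁ - p z₂) := by
        have h1 : (inner ℝ (z₁ - p z₁) (p z₁ - p z₂) : ℝ)
            = -(inner ℝ (z₁ - p z₁) (p z₂ - p z₁) : ℝ) := by
          rw [← inner_neg_right]
          congr 1
          abel
        rw [h1]
        linarith
      have e4 : (0:ℝ) ≤ inner ℝ (p z₂ - z₂) (p z₁ - p z₂) := by
        have h1 : (inner ℝ (p z₂ - z₂) (p z₁ - p z₂) : ℝ)
            = -(inner ℝ (z₂ - p z₂) (p z₁ - p z₂) : ℝ) := by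
          rw [← inner_neg_left]
          congr 1
          abel
        rw [h1]
        linarith
      have hsplit : (inner ℝ (z₁ - z₂) (p z₁ - p z₂) : ℝ)
          = inner ℝ (z₁ - p z₁) (p z₁ - p z₂) + inner ℝ (p z₁ - p z₂) (p z₁ - p z₂)
            + inner ℝ (p z₂ - z₂) (p z₁ - p z₂) := by
        have h1 : z₁ - z₂ = (z₁ - p z₁) + (p z₁ - p z₂) + (p z₂ - z₂) := by abel
        rw [h1, inner_add_left, inner_add_left]
      linarith
    have h5 : ‖p z₁ - p z₂‖^2 ≤ ‖z₁ - z₂‖ * ‖p z₁ - p z₂‖ := by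
      rw [← real_inner_self_eq_norm_sq]
      exact le_trans key (real_inner_le_norm _ _)
    rcases eq_or_lt_of_le (norm_nonneg (p z₁ - p z₂)) with h | h
    · rw [← h]; exact norm_nonneg _
    · have := mul_le_mul_of_nonneg_right (le_refl (1:ℝ)) h.le
      nlinarith
  have hpid : ∀ z ∈ K, p z = z := by
    intro z hz
    have h1 := hpvar z z hz
    have h2 : (0:ℝ) ≤ inner ℝ (z - p z) (z - p z) := real_inner_self_nonneg
    have h3 : z - p z = 0 := inner_self_eq_zero.1 (le_antisymm h1 h2)
    exact (eq_of_sub_eq_zero h3).symm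
  have hpcont : Continuous p := by
    refine LipschitzWith.continuous (K := 1) ?_
    refine LipschitzWith.of_dist_le_mul fun z₁ z₂ => ?_
    rw [dist_eq_norm, dist_eq_norm]
    simpa using hplip z₁ z₂
  obtain ⟨R₀, hR₀⟩ := hKc.isBounded.subset_closedBall 0
  set R : ℝ := max R₀ 1 with hR'
  have hRpos : 0 < R := lt_of_lt_of_le one_pos (le_max_right _ _)
  have hKR : K ⊆ closedBall 0 R := subset_trans hR₀ (closedBall_subset_closedBall (le_max_left _ _))
  set φ : EuclideanSpace ℝ (Fin n) → EuclideanSpace ℝ (Fin n) :=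
    fun x => R⁻¹ • f (p (R • x)) with hφ'
  have hmapsK : ∀ x, p (R • x) ∈ K := fun x => hpK _
  have hφcont : ContinuousOn φ (closedBall 0 1) := by
    refine ContinuousOn.const_smul (g := fun x => f (p (R • x))) ?_ R⁻¹
    apply hf.comp
    · exact (hpcont.comp (continuous_const_smul R)).continuousOn
    · exact fun x _ => hmapsK x
  have hφmaps : MapsTo φ (closedBall (0 : EuclideanSpace ℝ (Fin n)) 1) (closedBall 0 1) := by
    intro x _
    rw [mem_closedBall_zero_iff, hφ']
    dsimp only
    rw [norm_smul, Real.norm_eq_abs, abs_of_pos (inv_pos.2 hRpos)]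
    have h1 : ‖f (p (R • x))‖ ≤ R :=
      mem_closedBall_zero_iff.1 (hKR (hmaps (hmapsK x)))
    calc R⁻¹ * ‖f (p (R • x))‖ ≤ R⁻¹ * R := mul_le_mul_of_nonneg_left h1 (inv_pos.2 hRpos).le
      _ = 1 := inv_mul_cancel₀ (ne_of_gt hRpos)
  obtain ⟨x₁, hx₁, hfix⟩ := brouwer_closedBall n φ hφcont hφmaps
  set y : EuclideanSpace ℝ (Fin n) := R • x₁ with hy'
  have hy : f (p y) = y := by
    have h1 : R • φ x₁ = R • x₁ := by rw [hfix]
    rw [hφ'] at h1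
    dsimp only at h1
    rw [smul_smul, mul_inv_cancel₀ (ne_of_gt hRpos), one_smul] at h1
    exact h1
  have hyK : y ∈ K := by rw [← hy]; exact hmaps (hpK y)
  refine ⟨y, hyK, ?_⟩
  rw [hpid y hyK] at hy
  exact hy

theorem kkm_simplex (n : ℕ) (hn : 0 < n) (C : Fin n → Set (EuclideanSpace ℝ (Fin n)))
    (hC : ∀ i, IsClosed (C i))
    (hK : ∀ x : EuclideanSpace ℝ (Fin n), (∀ i, 0 ≤ x i) → (∑ i, x i) = 1 →
      ∃ i, x i ≠ 0 ∧ x ∈ C i) :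
    ∃ x : EuclideanSpace ℝ (Fin n), (∀ i, 0 ≤ x i) ∧ (∑ i, x i) = 1 ∧ ∀ i, x ∈ C i := by
  classical
  set S : Set (EuclideanSpace ℝ (Fin n)) := {x | (∀ i, 0 ≤ x i) ∧ (∑ i, x i) = 1} with hS'
  have hproj : ∀ i : Fin n, Continuous fun x : EuclideanSpace ℝ (Fin n) => x i :=
    fun i => (EuclideanSpace.proj (𝕜 := ℝ) i).continuous
  have hScl : IsClosed S := by
    have h1 : S = (⋂ i, {x : EuclideanSpace ℝ (Fin n) | 0 ≤ x i}) ∩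
        {x : EuclideanSpace ℝ (Fin n) | (∑ i, x i) = 1} := by
      ext x; simp only [hS', mem_setOf_eq, mem_inter_iff, mem_iInter]
      try tauto
    rw [h1]
    exact (isClosed_iInter fun i =>
        isClosed_le continuous_const (hproj i)).inter
      (isClosed_eq (continuous_finset_sum _ fun i _ => hproj i) continuous_const)
  have hSbd : S ⊆ closedBall 0 1 := by
    intro x hx
    obtain ⟨hx0, hx1⟩ := hx
    have hle1 : ∀ i, x i ≤ 1 := by
      intro i
      calc x i ≤ ∑ j, x j := Finset.single_le_sum (fun j _ => hx0 j) (Finset.mem_univ i)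
        _ = 1 := hx1
    rw [mem_closedBall_zero_iff, EuclideanSpace.norm_eq]
    have h2 : (∑ i, ‖x i‖ ^ 2) ≤ 1 := by
      calc (∑ i, ‖x i‖ ^ 2) ≤ ∑ i, x i := by
            refine Finset.sum_le_sum fun i _ => ?_
            rw [Real.norm_eq_abs, sq_abs]
            nlinarith [hx0 i, hle1 i]
        _ = 1 := hx1
    calc Real.sqrt (∑ i, ‖x i‖ ^ 2) ≤ Real.sqrt 1 := Real.sqrt_le_sqrt h2
      _ = 1 := Real.sqrt_one
  have hScomp : IsCompact S :=
    isCompact_of_isClosed_isBounded hScl (isBounded_closedBall.subset hSbd)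
  have hSconv : Convex ℝ S := by
    intro x hx y hy a b ha hb hab
    constructor
    · intro i
      have h1 : (a • x + b • y) i = a * x i + b * y i := rfl
      rw [h1]
      exact add_nonneg (mul_nonneg ha (hx.1 i)) (mul_nonneg hb (hy.1 i))
    · have h1 : (∑ i, (a • x + b • y) i) = ∑ i, (a * x i + b * y i) := rfl
      rw [h1, Finset.sum_add_distrib, ← Finset.mul_sum, ← Finset.mul_sum, hx.2, hy.2]
      linarith
  have hSne : S.Nonempty := by
    refine ⟨WithLp.toLp 2 (fun _ => (n : ℝ)⁻¹), fun i => by rw [PiLp.toLp_apply]; positivity, ?_⟩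
    simp only [PiLp.toLp_apply]
    rw [Finset.sum_const, Finset.card_univ, Fintype.card_fin, nsmul_eq_mul]
    exact mul_inv_cancel₀ (Nat.cast_ne_zero.2 hn.ne')
  by_contra hcon
  push_neg at hcon
  set D : Fin n → Set (EuclideanSpace ℝ (Fin n)) := fun i => C i ∩ S with hD'
  have hDcl : ∀ i, IsClosed (D i) := fun i => (hC i).inter hScl
  have hDne : ∀ i, (D i).Nonempty := by
    intro i
    set e : EuclideanSpace ℝ (Fin n) := EuclideanSpace.single i 1 with he'
    have he1 : ∀ j, 0 ≤ e j := by
      intro j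
      rw [he', EuclideanSpace.single_apply]
      split <;> norm_num
    have he2 : (∑ j, e j) = 1 := by
      simp [he', EuclideanSpace.single_apply]
    obtain ⟨j, hj1, hj2⟩ := hK e he1 he2
    have hij : j = i := by
      by_contra h
      apply hj1
      rw [he', EuclideanSpace.single_apply, if_neg h]
    exact ⟨e, by rw [← hij]; exact hj2, he1, he2⟩
  set β : Fin n → EuclideanSpace ℝ (Fin n) → ℝ := fun i x => infDist x (D i) with hβ'
  have hβ0 : ∀ i x, 0 ≤ β i x := fun i x => infDist_nonneg
  have hβcont : ∀ i, Continuous (β i) := fun i => continuous_infDist_pt (D i)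
  set T : EuclideanSpace ℝ (Fin n) → ℝ := fun x => ∑ i, β i x with hT'
  have hT0 : ∀ x, 0 ≤ T x := fun x => Finset.sum_nonneg fun i _ => hβ0 i x
  have hTcont : Continuous T := continuous_finset_sum _ fun i _ => hβcont i
  have h1T : ∀ x, (0:ℝ) < 1 + T x := fun x => by linarith [hT0 x]
  have hTpos : ∀ x ∈ S, 0 < T x := by
    intro x hx
    obtain ⟨i, hi⟩ := hcon x hx.1 hx.2
    have hnotD : x ∉ D i := fun h => hi h.1
    have h2 : infDist x (D i) ≠ 0 := fun h =>
      hnotD (((hDcl i).mem_iff_infDist_zero (hDne i)).2 h)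
    have h3 : 0 < β i x := lt_of_le_of_ne (hβ0 i x) (Ne.symm h2)
    exact Finset.sum_pos' (fun j _ => hβ0 j x) ⟨i, Finset.mem_univ i, h3⟩
  set F : EuclideanSpace ℝ (Fin n) → EuclideanSpace ℝ (Fin n) :=
    fun x => (1 + T x)⁻¹ • (x + ∑ i, β i x • EuclideanSpace.single i 1) with hF'
  have hFcoord : ∀ x j, F x j = (1 + T x)⁻¹ * (x j + β j x) := by
    intro x j
    have hv : ∀ v : EuclideanSpace ℝ (Fin n), v j = EuclideanSpace.proj (𝕜 := ℝ) j v :=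
      fun v => rfl
    rw [hF']; dsimp only
    conv_lhs => rw [hv ((1 + T x)⁻¹ • (x + ∑ i, β i x • EuclideanSpace.single i 1))]
    rw [_root_.map_smul, smul_eq_mul]
    congr 1
    rw [map_add, map_sum, ← hv x]
    congr 1
    have h4 : ∀ i, EuclideanSpace.proj (𝕜 := ℝ) j (β i x • EuclideanSpace.single i 1)
        = β i x * (if j = i then (1:ℝ) else 0) := by
      intro i
      rw [_root_.map_smul, smul_eq_mul]
      congr 1
      rw [← hv, EuclideanSpace.single_apply]
    simp only [h4, mul_ite, mul_one, mul_zero]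
    rw [Finset.sum_ite_eq]
    simp
  have hFcont : ContinuousOn F S := by
    apply Continuous.continuousOn
    refine Continuous.smul ((continuous_const.add hTcont).inv₀ fun x => ne_of_gt (h1T x)) ?_
    exact continuous_id.add (continuous_finset_sum _ fun i _ => (hβcont i).smul continuous_const)
  have hFmaps : MapsTo F S S := by
    intro x hx
    constructor
    · intro j
      rw [hFcoord x j]
      exact mul_nonneg (inv_pos.2 (h1T x)).le (add_nonneg (hx.1 j) (hβ0 j x))
    · have h1 : (∑ j, F x j) = (1 + T x)⁻¹ * (∑ j, (x j + β j x)) := by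
        rw [Finset.mul_sum]
        exact Finset.sum_congr rfl fun j _ => hFcoord x j
      rw [h1, Finset.sum_add_distrib, hx.2]
      rw [show (∑ j, β j x) = T x from rfl]
      exact inv_mul_cancel₀ (ne_of_gt (h1T x))
  obtain ⟨z, hzS, hfix⟩ := brouwer_compact_convex n S hSne hScomp hSconv F hFcont hFmaps
  have hcoordz : ∀ j, β j z = T z * z j := by
    intro j
    have h1 : F z j = z j := by rw [hfix]
    rw [hFcoord] at h1
    have h2 : (1 + T z) ≠ 0 := ne_of_gt (h1T z)
    have h3 := congrArg (fun r => (1 + T z) * r) h1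
    dsimp only at h3
    rw [← mul_assoc, mul_inv_cancel₀ h2, one_mul] at h3
    nlinarith [h3]
  obtain ⟨i, hi0, hiC⟩ := hK z hzS.1 hzS.2
  have hβz : β i z = 0 :=
    ((hDcl i).mem_iff_infDist_zero (hDne i)).1 ⟨hiC, hzS⟩
  rw [hcoordz i] at hβz
  rcases mul_eq_zero.1 hβz with h | h
  · exact absurd h (ne_of_gt (hTpos z hzS))
  · exact hi0 h


/-- **Generalized FKKM lemma.** Let `X` be a nonempty subset of a Banach space `E` and
`T : X → 2^E` a set-valued map such that (1) each `T x` is nonempty and weakly closed,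
(2) `T x₀` is weakly compact for some `x₀ ∈ X`, and (3) the convex hull of every finite
subset `{x₁, …, xₙ} ⊆ X` is contained in `⋃ i, T xᵢ`.  Then
`⋂_{x ∈ X} (T x ∩ T x₀) ≠ ∅`, and in particular `⋂_{x ∈ X} T x ≠ ∅`. -/
theorem generalized_FKKM
    {E : Type*} [NormedAddCommGroup E] [NormedSpace ℝ E] [CompleteSpace E]
    (X : Set E) (hX : X.Nonempty) (T : E → Set E)
    (h1 : ∀ x ∈ X, (T x).Nonempty ∧ IsClosed (toWeakSpace ℝ E '' T x))
    (x₀ : E) (hx₀ : x₀ ∈ X)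
    (h2 : IsCompact (toWeakSpace ℝ E '' T x₀))
    (h3 : ∀ s : Finset E, ↑s ⊆ X →
      convexHull ℝ (↑s : Set E) ⊆ ⋃ x ∈ s, T x) :
    (⋂ x ∈ X, (T x ∩ T x₀)).Nonempty ∧ (⋂ x ∈ X, T x).Nonempty := by
  classical
  have hTclosed : ∀ x ∈ X, IsClosed (T x) := by
    intro x hx
    have hcl := (h1 x hx).2
    have heq : T x = toWeakSpaceCLM ℝ E ⁻¹' (toWeakSpace ℝ E '' T x) := by
      ext y
      simp only [mem_preimage, toWeakSpaceCLM_eq_toWeakSpace]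
      constructor
      · exact fun hy => mem_image_of_mem _ hy
      · rintro ⟨z, hz, hze⟩
        rwa [← (toWeakSpace ℝ E).injective hze]
    rw [heq]
    exact hcl.preimage (toWeakSpaceCLM ℝ E).continuous
  -- every finite subfamily containing x₀ has nonempty intersection (finite KKM)
  have hfinite : ∀ u : Finset E, ↑u ⊆ X → x₀ ∈ u → (⋂ z ∈ u, T z).Nonempty := by
    intro u hu hx₀u
    set m := u.card with hm
    have hm0 : 0 < m := Finset.card_pos.2 ⟨x₀, hx₀u⟩
    set e := u.equivFin with he
    set v : Fin m → E := fun i => (e.symm i : E) with hv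
    have hvX : ∀ i, v i ∈ X := fun i => hu (e.symm i).2
    set C : Fin m → Set (EuclideanSpace ℝ (Fin m)) := fun i =>
      {ξ | (∀ j, 0 ≤ ξ j) ∧ (∑ j, ξ j) = 1 ∧ (∑ j, ξ j • v j) ∈ T (v i)} with hC
    have hproj : ∀ j : Fin m, Continuous fun ξ : EuclideanSpace ℝ (Fin m) => ξ j :=
      fun j => (EuclideanSpace.proj (𝕜 := ℝ) j).continuous
    have hpcont : Continuous fun ξ : EuclideanSpace ℝ (Fin m) => ∑ j, ξ j • v j :=
      continuous_finset_sum _ fun j _ => (hproj j).smul continuous_const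
    have hCcl : ∀ i, IsClosed (C i) := by
      intro i
      have heq : C i = (⋂ j, {ξ : EuclideanSpace ℝ (Fin m) | 0 ≤ ξ j}) ∩
          ({ξ : EuclideanSpace ℝ (Fin m) | (∑ j, ξ j) = 1} ∩
           ((fun ξ : EuclideanSpace ℝ (Fin m) => ∑ j, ξ j • v j) ⁻¹' T (v i))) := by
        ext ξ
        simp only [hC, mem_setOf_eq, mem_inter_iff, mem_iInter, mem_preimage]
        try tauto
      rw [heq]
      refine (isClosed_iInter fun j => isClosed_le continuous_const (hproj j)).inter
        ((isClosed_eq (continuous_finset_sum _ fun j _ => hproj j) continuous_const).inter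
          ((hTclosed (v i) (hvX i)).preimage hpcont))
    have hKc : ∀ ξ : EuclideanSpace ℝ (Fin m), (∀ j, 0 ≤ ξ j) → (∑ j, ξ j) = 1 →
        ∃ i, ξ i ≠ 0 ∧ ξ ∈ C i := by
      intro ξ hξ0 hξ1
      set I : Finset (Fin m) := Finset.univ.filter (fun j => ξ j ≠ 0) with hI
      set pt : E := ∑ j, ξ j • v j with hpt
      have hsumI : (∑ j ∈ I, ξ j) = 1 := by
        rw [hI, Finset.sum_filter_ne_zero, hξ1]
      have hptI : pt = ∑ j ∈ I, ξ j • v j := by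
        rw [hpt]
        refine (Finset.sum_subset (Finset.subset_univ I) fun j _ hj => ?_).symm
        have : ξ j = 0 := by
          by_contra h
          exact hj (Finset.mem_filter.2 ⟨Finset.mem_univ j, h⟩)
        rw [this, zero_smul]
      have hmem : pt ∈ convexHull ℝ (↑(I.image v) : Set E) := by
        have hcm := Finset.centerMass_mem_convexHull I (w := ξ) (z := v)
          (fun j _ => hξ0 j) (by rw [hsumI]; norm_num)
          (fun j hj => Finset.mem_coe.2 (Finset.mem_image_of_mem v hj))
        rwa [Finset.centerMass_eq_of_sum_1 _ _ hsumI, ← hptI] at hcm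
      have hsub : ↑(I.image v) ⊆ X := by
        intro z hz
        rw [Finset.coe_image] at hz
        obtain ⟨j, _, rfl⟩ := hz
        exact hvX j
      have h4 := h3 (I.image v) hsub hmem
      rw [mem_iUnion₂] at h4
      obtain ⟨z, hzmem, hzT⟩ := h4
      obtain ⟨i, hiI, rfl⟩ := Finset.mem_image.1 hzmem
      exact ⟨i, (Finset.mem_filter.1 hiI).2, hξ0, hξ1, by rw [← hpt]; exact hzT⟩
    obtain ⟨ξ, hξ0, hξ1, hξC⟩ := kkm_simplex m hm0 C hCcl hKc
    refine ⟨∑ j, ξ j • v j, mem_iInter₂.2 fun z hz => ?_⟩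
    have hzv : v (e ⟨z, hz⟩) = z := by
      rw [hv]; simp only [Equiv.symm_apply_apply]
    rw [← hzv]
    exact (hξC (e ⟨z, hz⟩)).2.2
  -- compactness in the weak topology
  set Z : ↥X → Set (WeakSpace ℝ E) := fun x => toWeakSpace ℝ E '' T x with hZ'
  have hZcl : ∀ x : ↥X, IsClosed (Z x) := fun x => (h1 x x.2).2
  have hne : ((toWeakSpace ℝ E '' T x₀) ∩ ⋂ x : ↥X, Z x).Nonempty := by
    by_contra hemp
    rw [not_nonempty_iff_eq_empty] at hemp
    obtain ⟨uf, huf⟩ := h2.elim_finite_subfamily_closed Z hZcl hemp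
    set u : Finset E := insert x₀ (uf.image (fun x : ↥X => (x : E))) with hu'
    have husub : ↑u ⊆ X := by
      intro z hz
      rw [hu', Finset.coe_insert] at hz
      rcases hz with rfl | hz
      · exact hx₀
      · rw [Finset.coe_image] at hz
        obtain ⟨x, _, rfl⟩ := hz
        exact x.2
    obtain ⟨y, hy⟩ := hfinite u husub (Finset.mem_insert_self _ _)
    have hyT : ∀ z ∈ u, y ∈ T z := fun z hz => mem_iInter₂.1 hy z hz
    have hmem : toWeakSpace ℝ E y ∈ (toWeakSpace ℝ E '' T x₀) ∩ ⋂ x ∈ uf, Z x := by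
      constructor
      · exact mem_image_of_mem _ (hyT x₀ (Finset.mem_insert_self _ _))
      · rw [mem_iInter₂]
        intro x hx
        refine mem_image_of_mem _ (hyT (x : E) ?_)
        rw [hu']
        exact Finset.mem_insert_of_mem (Finset.mem_image_of_mem _ hx)
    rw [huf] at hmem
    exact hmem
  obtain ⟨ζ, hζK, hζZ⟩ := hne
  obtain ⟨y₀, hy₀T, hy₀e⟩ := hζK
  have hy₀ : ∀ x ∈ X, y₀ ∈ T x := by
    intro x hx
    have hmem := mem_iInter.1 hζZ ⟨x, hx⟩
    obtain ⟨z, hzT, hze⟩ := hmem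
    have hzy : z = y₀ := (toWeakSpace ℝ E).injective (by rw [hze, hy₀e])
    rwa [hzy] at hzT
  constructor
  · exact ⟨y₀, mem_iInter₂.2 fun x hx => ⟨hy₀ x hx, hy₀T⟩⟩
  · exact ⟨y₀, mem_iInter₂.2 fun x hx => hy₀ x hx⟩
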